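/- Let G be a connected simple graph, let v ≠ w be vertices, and let c₁ ≠ c₂ be two vertices, both distinct from v and w, each of which separates v from w in G (i.e., v and w are disconnected both in G with c₁ deleted and in G with c₂ deleted). Then every path from v to w in G contains both c₁ and c₂, and either on every such path c₁ occurs before c₂ (in the order of traversal starting from v), or on every such path c₂ occurs before c₁. -/

import Mathlib

/-- The graph obtained from `H` by deleting the vertex `c` and all edges incident to it
(keeping the same vertex type). -/
def removeVertex {V : Type*} (H : SimpleGraph V) (c : V) : SimpleGraph V where
  Adj a b := H.Adj a b ∧ a ≠ c ∧ b ≠ c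
  symm := by
    refine ⟨?_⟩
    intro a b h
    exact ⟨h.1.symm, h.2.2, h.2.1⟩
  loopless := by
    refine ⟨?_⟩
    intro a h
    exact H.loopless.irrefl a h.1

open SimpleGraph

private lemma walk_avoid {V : Type*} [DecidableEq V] {G : SimpleGraph V} {c : V} :
    ∀ {a b : V} (p : G.Walk a b), c ∉ p.support → (removeVertex G c).Reachable a b := by
  intro a b p
  induction p with
  | nil => exact fun _ => Reachable.refl _
  | @cons a b' b h q ih =>
    intro hc
    rw [Walk.support_cons, List.mem_cons] at hc
    push_neg at hc
    have hb' : b' ≠ c := by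
      intro hb'; exact hc.2 (hb' ▸ q.start_mem_support)
    have hadj : (removeVertex G c).Adj a b' := ⟨h, fun ha => hc.1 ha.symm, hb'⟩
    exact hadj.reachable.trans (ih hc.2)

private lemma indexOf_getLast_of_nodup {α : Type*} [DecidableEq α] {l : List α}
    (h : l ≠ []) (hn : l.Nodup) : l.idxOf (l.getLast h) = l.length - 1 := by
  have hspec : l.dropLast ++ [l.getLast h] = l := List.dropLast_append_getLast h
  have hnotmem : l.getLast h ∉ l.dropLast := by
    intro hmem
    rw [← hspec] at hn
    exact (List.disjoint_of_nodup_append hn) hmem (List.mem_singleton_self _)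
  calc l.idxOf (l.getLast h) = (l.dropLast ++ [l.getLast h]).idxOf (l.getLast h) := by
        rw [hspec]
    _ = l.length - 1 := by
        rw [List.idxOf_append_of_notMem hnotmem]
        simp [List.length_dropLast]

/-- Index comparison helper for paths. -/
private lemma index_takeUntil {V : Type*} [DecidableEq V] {G : SimpleGraph V}
    {v w c₁ c₂ : V} (p : G.Walk v w) (hp : p.IsPath)
    (h1 : c₁ ∈ p.support) (h2 : c₂ ∈ p.support) (hne : c₁ ≠ c₂) :
    (c₂ ∉ (p.takeUntil c₁ h1).support → p.support.idxOf c₁ < p.support.idxOf c₂) ∧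
    (c₂ ∈ (p.takeUntil c₁ h1).support → p.support.idxOf c₂ < p.support.idxOf c₁) := by
  set q := p.takeUntil c₁ h1 with hq
  set r := p.dropUntil c₁ h1 with hr
  have hsp : p.support = q.support ++ r.support.tail := by
    conv_lhs => rw [← Walk.take_spec p h1]
    exact Walk.support_append _ _
  have hc1q : c₁ ∈ q.support := q.end_mem_support
  have hqnodup : q.support.Nodup := (hp.takeUntil h1).support_nodup
  have hqne : q.support ≠ [] := q.support_ne_nil
  have hqlast : q.support.getLast hqne = c₁ := q.getLast_support
  have hidx1q : q.support.idxOf c₁ = q.support.length - 1 := by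
    have := indexOf_getLast_of_nodup hqne hqnodup
    rwa [hqlast] at this
  have hidx1 : p.support.idxOf c₁ = q.support.length - 1 := by
    rw [hsp, List.idxOf_append_of_mem hc1q, hidx1q]
  have hlen : 1 ≤ q.support.length := List.length_pos_iff.mpr hqne
  constructor
  · intro hnot
    have : p.support.idxOf c₂ = q.support.length + r.support.tail.idxOf c₂ := by
      rw [hsp, List.idxOf_append_of_notMem hnot]
    omega
  · intro hmem
    have hidx2 : p.support.idxOf c₂ = q.support.idxOf c₂ := by
      rw [hsp, List.idxOf_append_of_mem hmem]
    have hlt : q.support.idxOf c₂ < q.support.length := List.idxOf_lt_length_iff.mpr hmem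
    have hneq : q.support.idxOf c₂ ≠ q.support.idxOf c₁ := by
      intro h
      exact hne ((List.idxOf_inj (y := c₁) hmem).mp h).symm
    omega

/-- Let `G` be a connected simple graph, let `v ≠ w` be vertices, and let `c₁ ≠ c₂` be
two vertices, both distinct from `v` and `w`, each of which separates `v` from `w` in
`G`. Then every path from `v` to `w` in `G` contains both `c₁` and `c₂`, and either on
every such path `c₁` occurs before `c₂` (in the order of traversal starting from `v`),
or on every such path `c₂` occurs before `c₁`. -/
theorem separators_linearly_ordered {V : Type*} [DecidableEq V] (G : SimpleGraph V)
    (hG : G.Connected) (v w c₁ c₂ : V) (hvw : v ≠ w) (hc : c₁ ≠ c₂)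
    (h1v : c₁ ≠ v) (h1w : c₁ ≠ w) (h2v : c₂ ≠ v) (h2w : c₂ ≠ w)
    (hsep1 : ¬ (removeVertex G c₁).Reachable v w)
    (hsep2 : ¬ (removeVertex G c₂).Reachable v w) :
    (∀ P : G.Path v w, c₁ ∈ P.1.support ∧ c₂ ∈ P.1.support) ∧
    ((∀ P : G.Path v w, P.1.support.idxOf c₁ < P.1.support.idxOf c₂) ∨
     (∀ P : G.Path v w, P.1.support.idxOf c₂ < P.1.support.idxOf c₁)) := by
  have hmem : ∀ P : G.Path v w, c₁ ∈ P.1.support ∧ c₂ ∈ P.1.support := by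
    intro P
    constructor
    · by_contra h; exact hsep1 (walk_avoid P.1 h)
    · by_contra h; exact hsep2 (walk_avoid P.1 h)
  refine ⟨hmem, ?_⟩
  by_contra h
  push_neg at h
  obtain ⟨⟨Q, hQ⟩, ⟨P, hP⟩⟩ := h
  -- On Q, c₂ comes before c₁; on P, c₁ comes before c₂.
  obtain ⟨hQ1, hQ2⟩ := hmem Q
  obtain ⟨hP1, hP2⟩ := hmem P
  have hQtake : c₂ ∈ (Q.1.takeUntil c₁ hQ1).support := by
    by_contra hnot
    exact absurd ((index_takeUntil Q.1 Q.2 hQ1 hQ2 hc).1 hnot) (not_lt.mpr hQ)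
  have hPtake : c₂ ∉ (P.1.takeUntil c₁ hP1).support := by
    intro hmem'
    exact absurd ((index_takeUntil P.1 P.2 hP1 hP2 hc).2 hmem') (not_lt.mpr hP)
  -- c₂ is not in the dropUntil part of Q
  have hQdrop : c₂ ∉ (Q.1.dropUntil c₁ hQ1).support := by
    have hnodup : Q.1.support.Nodup := Q.2.support_nodup
    rw [← Walk.take_spec Q.1 hQ1, Walk.support_append] at hnodup
    have hdisj := List.disjoint_of_nodup_append hnodup
    intro hmem'
    rw [(Q.1.dropUntil c₁ hQ1).support_eq_cons, List.mem_cons] at hmem'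
    rcases hmem' with h' | h'
    · exact hc h'.symm
    · exact hdisj hQtake h'
  -- Build a walk from v to w avoiding c₂
  set W : G.Walk v w := (P.1.takeUntil c₁ hP1).append (Q.1.dropUntil c₁ hQ1) with hW
  have hWavoid : c₂ ∉ W.support := by
    rw [hW, Walk.mem_support_append_iff]
    push_neg
    exact ⟨hPtake, hQdrop⟩
  exact hsep2 (walk_avoid W hWavoid)
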